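/- Let X be a real vector space, let τ_0 be the weak topology on X induced by the algebraic dual X' (the coarsest topology making every linear functional on X continuous), and let τ_c be the core convex topology. Then X is finite-dimensional if and only if τ_0 = τ_c. -/

import Mathlib

open Pointwise

/-- Algebraic interior (core) of a set `A` in a real vector space:
`cor A = {x ∈ A | ∀ d, ∃ δ > 0, ∀ λ ∈ [0, δ], x + λ • d ∈ A}`. -/
def cor {X : Type*} [AddCommGroup X] [Module ℝ X] (A : Set X) : Set X :=
  {x | x ∈ A ∧ ∀ d : X, ∃ δ : ℝ, 0 < δ ∧ ∀ lam ∈ Set.Icc (0 : ℝ) δ, x + lam • d ∈ A}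

/-- Relative algebraic interior of `A`: directions are taken in `L(A) = span (A - A)`. -/
def icr {X : Type*} [AddCommGroup X] [Module ℝ X] (A : Set X) : Set X :=
  {x | x ∈ A ∧ ∀ d ∈ Submodule.span ℝ (A - A),
    ∃ δ : ℝ, 0 < δ ∧ ∀ lam ∈ Set.Icc (0 : ℝ) δ, x + lam • d ∈ A}

/-- Vectorial closure of `A`:
`vcl A = {b | ∃ d, ∀ δ > 0, ∃ λ ∈ [0, δ], b + λ • d ∈ A}`. -/
def vcl {X : Type*} [AddCommGroup X] [Module ℝ X] (A : Set X) : Set X :=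
  {b | ∃ d : X, ∀ δ : ℝ, 0 < δ → ∃ lam ∈ Set.Icc (0 : ℝ) δ, b + lam • d ∈ A}

/-- The core convex topology `τ_c`: the topology whose open sets are the unions of
members of `𝔅 = {A | A convex and cor A = A}`; since `𝔅` is a topological basis
(closed under binary intersection, contains `X` and `∅`), this is the topology
generated by `𝔅`. -/
def tauc (X : Type*) [AddCommGroup X] [Module ℝ X] : TopologicalSpace X :=
  TopologicalSpace.generateFrom {A : Set X | Convex ℝ A ∧ cor A = A}

/-- The weak topology `τ₀` on `X` induced by the algebraic dual: the coarsest topology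
making every linear functional `X → ℝ` continuous. -/
def tau0 (X : Type*) [AddCommGroup X] [Module ℝ X] : TopologicalSpace X :=
  ⨅ f : X →ₗ[ℝ] ℝ, TopologicalSpace.induced f inferInstance

section Aux

variable {X : Type*} [AddCommGroup X] [Module ℝ X]

/-- The core of an open halfspace `{x | f x < r}` is itself. -/
lemma cor_halfspace_lt (f : X →ₗ[ℝ] ℝ) (r : ℝ) :
    cor {x | f x < r} = {x | f x < r} := by
  refine Set.Subset.antisymm (fun x hx => hx.1) (fun x hx => ?_)
  have hxr : f x < r := hx
  refine ⟨hx, fun d => ?_⟩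
  have hpos : (0:ℝ) < |f d| + 1 := by positivity
  refine ⟨(r - f x) / (2 * (|f d| + 1)), div_pos (by linarith) (by positivity), fun lam hlam => ?_⟩
  have h1 : lam * f d ≤ lam * |f d| :=
    mul_le_mul_of_nonneg_left (le_abs_self _) hlam.1
  have h2 : lam * (2 * (|f d| + 1)) ≤ r - f x := by
    rw [← le_div_iff₀ (by positivity)]
    exact hlam.2
  show f (x + lam • d) < r
  rw [map_add, map_smul, smul_eq_mul]
  nlinarith [hlam.1, abs_nonneg (f d)]

lemma halfspace_mem_basis (f : X →ₗ[ℝ] ℝ) (r : ℝ) :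
    {x : X | f x < r} ∈ {A : Set X | Convex ℝ A ∧ cor A = A} :=
  ⟨convex_halfSpace_lt (LinearMap.isLinear f) r, cor_halfspace_lt f r⟩

lemma halfspace_gt_eq (f : X →ₗ[ℝ] ℝ) (r : ℝ) :
    {x : X | r < f x} = {x : X | (-f) x < -r} := by
  ext x; simp [neg_lt, lt_neg]

/-- `τ_c` is always finer than `τ₀`. -/
lemma tauc_le_tau0 (X : Type*) [AddCommGroup X] [Module ℝ X] : tauc X ≤ tau0 X := by
  refine le_iInf fun f => ?_
  have h : (inferInstance : TopologicalSpace ℝ)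
      = TopologicalSpace.generateFrom {s | ∃ a, s = Set.Ioi a ∨ s = Set.Iio a} :=
    OrderTopology.topology_eq_generate_intervals
  rw [h, induced_generateFrom_eq]
  apply TopologicalSpace.generateFrom_anti
  rintro U ⟨s, ⟨a, rfl | rfl⟩, rfl⟩
  · have : f ⁻¹' Set.Ioi a = {x : X | (-f) x < -a} := by
      ext x; simp [neg_lt, lt_neg, Set.mem_Ioi]
    rw [this]
    exact halfspace_mem_basis (-f) (-a)
  · have : f ⁻¹' Set.Iio a = {x : X | f x < a} := rfl
    rw [this]
    exact halfspace_mem_basis f a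

/-- Linear functionals are `τ₀`-continuous. -/
lemma continuous_tau0 (f : X →ₗ[ℝ] ℝ) :
    @Continuous X ℝ (tau0 X) inferInstance f := by
  rw [continuous_iff_le_induced]
  exact iInf_le (fun g : X →ₗ[ℝ] ℝ => TopologicalSpace.induced g inferInstance) f

/-! ### ℓ¹-type norm associated to a basis -/

noncomputable def bnorm {ι : Type*} (b : Module.Basis ι ℝ X) (x : X) : ℝ :=
  (b.repr x).sum fun _ r => |r|

lemma bnorm_eq_sum {ι : Type*} (b : Module.Basis ι ℝ X) (x : X) {s : Finset ι}
    (h : (b.repr x).support ⊆ s) : bnorm b x = ∑ i ∈ s, |b.repr x i| :=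
  Finsupp.sum_of_support_subset _ h _ (fun _ _ => abs_zero)

lemma bnorm_nonneg {ι : Type*} (b : Module.Basis ι ℝ X) (x : X) : 0 ≤ bnorm b x := by
  rw [bnorm_eq_sum b x (subset_refl _)]
  exact Finset.sum_nonneg fun i _ => abs_nonneg _

lemma bnorm_zero {ι : Type*} (b : Module.Basis ι ℝ X) : bnorm b 0 = 0 := by
  simp [bnorm]

lemma bnorm_add_le {ι : Type*} (b : Module.Basis ι ℝ X) (x y : X) :
    bnorm b (x + y) ≤ bnorm b x + bnorm b y := by
  classical
  set s := (b.repr x).support ∪ (b.repr y).support with hs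
  have hx : (b.repr x).support ⊆ s := Finset.subset_union_left
  have hy : (b.repr y).support ⊆ s := Finset.subset_union_right
  have hxy : (b.repr (x + y)).support ⊆ s := by
    rw [map_add]; exact Finsupp.support_add
  rw [bnorm_eq_sum b _ hxy, bnorm_eq_sum b x hx, bnorm_eq_sum b y hy,
    ← Finset.sum_add_distrib]
  refine Finset.sum_le_sum fun i _ => ?_
  simp only [map_add, Finsupp.coe_add, Pi.add_apply]
  exact abs_add_le _ _

lemma bnorm_smul {ι : Type*} (b : Module.Basis ι ℝ X) (c : ℝ) (x : X) :
    bnorm b (c • x) = |c| * bnorm b x := by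
  have hsub : (b.repr (c • x)).support ⊆ (b.repr x).support := by
    rw [map_smul]; exact Finsupp.support_smul
  rw [bnorm_eq_sum b _ hsub, bnorm_eq_sum b x (subset_refl _), Finset.mul_sum]
  refine Finset.sum_congr rfl fun i _ => ?_
  rw [map_smul, Finsupp.smul_apply, smul_eq_mul, abs_mul]

lemma bnorm_pos {ι : Type*} (b : Module.Basis ι ℝ X) {x : X} (hx : x ≠ 0) :
    0 < bnorm b x := by
  have hr : b.repr x ≠ 0 := fun h => hx (by simpa using congrArg b.repr.symm h)
  obtain ⟨i, hi⟩ := Finsupp.support_nonempty_iff.2 hr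
  rw [bnorm_eq_sum b x (subset_refl _)]
  refine Finset.sum_pos' (fun j _ => abs_nonneg _) ⟨i, hi, ?_⟩
  exact abs_pos.2 (Finsupp.mem_support_iff.1 hi)

/-- The unit ball of `bnorm` is convex. -/
lemma bnorm_ball_convex {ι : Type*} (b : Module.Basis ι ℝ X) :
    Convex ℝ {x : X | bnorm b x < 1} := by
  intro x hx y hy sa sb hsa hsb hab
  have hx' : bnorm b x < 1 := hx
  have hy' : bnorm b y < 1 := hy
  have h1 : bnorm b (sa • x + sb • y) ≤ sa * bnorm b x + sb * bnorm b y := by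
    calc bnorm b (sa • x + sb • y) ≤ bnorm b (sa • x) + bnorm b (sb • y) :=
          bnorm_add_le b _ _
      _ = |sa| * bnorm b x + |sb| * bnorm b y := by rw [bnorm_smul, bnorm_smul]
      _ = sa * bnorm b x + sb * bnorm b y := by
          rw [abs_of_nonneg hsa, abs_of_nonneg hsb]
  show bnorm b (sa • x + sb • y) < 1
  have h4 : sa * bnorm b x + sb * bnorm b y < 1 := by
    rcases hsa.eq_or_lt with h0 | h0
    · have hsb1 : sb = 1 := by linarith
      rw [← h0, hsb1]
      simpa using hy'
    · have h2 : sa * bnorm b x < sa * 1 := mul_lt_mul_of_pos_left hx' h0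
      have h3 : sb * bnorm b y ≤ sb * 1 := mul_le_mul_of_nonneg_left hy'.le hsb
      rw [mul_one] at h2 h3
      linarith
  linarith

/-- The unit ball of `bnorm` equals its core. -/
lemma bnorm_ball_cor {ι : Type*} (b : Module.Basis ι ℝ X) :
    cor {x : X | bnorm b x < 1} = {x : X | bnorm b x < 1} := by
  refine Set.Subset.antisymm (fun x hx => hx.1) (fun x hx => ?_)
  have hx1 : bnorm b x < 1 := hx
  refine ⟨hx, fun d => ?_⟩
  have hd1 : (0:ℝ) < bnorm b d + 1 := by linarith [bnorm_nonneg b d]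
  set δ := (1 - bnorm b x) / (bnorm b d + 1) with hδ
  have hδpos : 0 < δ := div_pos (by linarith) hd1
  refine ⟨δ, hδpos, fun lam hlam => ?_⟩
  have h1 : bnorm b (x + lam • d) ≤ bnorm b x + lam * bnorm b d := by
    calc bnorm b (x + lam • d) ≤ bnorm b x + bnorm b (lam • d) := bnorm_add_le b _ _
      _ = bnorm b x + |lam| * bnorm b d := by rw [bnorm_smul]
      _ = bnorm b x + lam * bnorm b d := by rw [abs_of_nonneg hlam.1]
  have h2 : lam * bnorm b d ≤ δ * bnorm b d :=
    mul_le_mul_of_nonneg_right hlam.2 (bnorm_nonneg b d)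
  have h3 : δ * (bnorm b d + 1) = 1 - bnorm b x := div_mul_cancel₀ _ hd1.ne'
  show bnorm b (x + lam • d) < 1
  nlinarith

/-- If `τ₀ ≤ τ_c` then `X` is finite-dimensional. -/
lemma findim_of_le (X : Type*) [AddCommGroup X] [Module ℝ X]
    (h : tau0 X ≤ tauc X) : FiniteDimensional ℝ X := by
  classical
  by_contra hfd
  letI : TopologicalSpace X := tau0 X
  set b := Module.Basis.ofVectorSpace ℝ X with hb
  set B : Set X := {x | bnorm b x < 1} with hB
  have hBopen : IsOpen B := by
    refine h _ ?_
    exact TopologicalSpace.isOpen_generateFrom_of_mem ⟨bnorm_ball_convex b, bnorm_ball_cor b⟩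
  have hB0 : (0 : X) ∈ B := by
    show bnorm b 0 < 1
    rw [bnorm_zero]; norm_num
  have hnhds : B ∈ @nhds X (⨅ f : X →ₗ[ℝ] ℝ, TopologicalSpace.induced f inferInstance) 0 :=
    hBopen.mem_nhds hB0
  rw [nhds_iInf] at hnhds
  obtain ⟨I, hIfin, V, hV, hBeq⟩ := Filter.mem_iInf.1 hnhds
  haveI := hIfin.fintype
  set φ : X →ₗ[ℝ] (I → ℝ) := LinearMap.pi (fun i => (i : X →ₗ[ℝ] ℝ)) with hφ
  have hninj : ¬ Function.Injective φ := fun hinj =>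
    hfd (FiniteDimensional.of_injective φ hinj)
  have hker : LinearMap.ker φ ≠ ⊥ := fun hk => hninj (LinearMap.ker_eq_bot.1 hk)
  obtain ⟨v, hvker, hvne⟩ := (Submodule.ne_bot_iff _).1 hker
  have hfv : ∀ i : I, (i : X →ₗ[ℝ] ℝ) v = 0 := by
    intro i
    have := LinearMap.mem_ker.1 hvker
    exact congrFun this i
  have hbv : 0 < bnorm b v := bnorm_pos b hvne
  set c : ℝ := 2 / bnorm b v with hc
  have hz : c • v ∈ B := by
    rw [hBeq]
    refine Set.mem_iInter.2 fun i => ?_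
    have hVi := hV i
    rw [nhds_induced] at hVi
    obtain ⟨u, hu, hsub⟩ := Filter.mem_comap.1 hVi
    refine hsub ?_
    have : (i : X →ₗ[ℝ] ℝ) (c • v) = (i : X →ₗ[ℝ] ℝ) (0 : X) := by
      rw [map_smul, hfv i, map_zero, smul_zero]
    show (i : X →ₗ[ℝ] ℝ) (c • v) ∈ u
    rw [this]
    exact mem_of_mem_nhds hu
  have : bnorm b (c • v) < 1 := hz
  rw [bnorm_smul, hc, abs_of_pos (by positivity), div_mul_cancel₀ _ hbv.ne'] at this
  linarith

/-- In the finite-dimensional case `τ₀` is finer than `τ_c`. -/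
lemma tau0_le_tauc (X : Type*) [AddCommGroup X] [Module ℝ X] [FiniteDimensional ℝ X] :
    tau0 X ≤ tauc X := by
  classical
  letI : TopologicalSpace X := tau0 X
  refine le_generateFrom ?_
  rintro A ⟨hA, hcor⟩
  rw [isOpen_iff_mem_nhds]
  intro x hxA
  set n := Module.finrank ℝ X with hn
  set b := Module.finBasis ℝ X with hbdef
  have hc : x ∈ cor A := hcor.symm ▸ hxA
  choose δp hδp hp using fun i : Fin n => hc.2 (b i)
  choose δm hδm hm using fun i : Fin n => hc.2 (-(b i))
  set δ : Fin n → ℝ := fun i => min (δp i) (δm i) with hδdef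
  have hδpos : ∀ i, 0 < δ i := fun i => lt_min (hδp i) (hδm i)
  set F : X → ℝ := fun y => ∑ i, |b.coord i y - b.coord i x| / δ i with hF
  have hFcont : Continuous F := by
    refine continuous_finset_sum _ fun i _ => ?_
    have h1 : Continuous fun y : X => b.coord i y := continuous_tau0 (b.coord i)
    exact ((h1.sub continuous_const).abs).div_const _
  set U : Set X := F ⁻¹' Set.Iio 1 with hU
  have hUopen : IsOpen U := hFcont.isOpen_preimage _ isOpen_Iio
  have hxU : x ∈ U := by
    show F x < 1
    simp [hF]
  refine Filter.mem_of_superset (hUopen.mem_nhds hxU) ?_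
  intro y hy
  -- notation
  set t : Fin n → ℝ := fun i => b.repr (y - x) i with ht
  set a : Fin n → ℝ := fun i => |t i| / δ i with ha
  have hsum : ∑ i, a i < 1 := by
    have : F y < 1 := hy
    refine lt_of_le_of_lt (le_of_eq ?_) this
    refine Finset.sum_congr rfl fun i _ => ?_
    have h5 : a i = |t i| / δ i := rfl
    rw [h5, ht]
    simp [Module.Basis.coord_apply, map_sub, Finsupp.coe_sub, Pi.sub_apply]
  have hanonneg : ∀ i, 0 ≤ a i := fun i => div_nonneg (abs_nonneg _) (hδpos i).le
  set s : Fin n → ℝ := fun i => if 0 ≤ t i then 1 else -1 with hsdef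
  set p : Fin n → X := fun i => x + (δ i * s i) • b i with hpdef
  have hpA : ∀ i, p i ∈ A := by
    intro i
    by_cases hti : 0 ≤ t i
    · have : p i = x + (δ i) • (b i) := by
        simp [hpdef, hsdef, hti]
      rw [this]
      exact hp i (δ i) ⟨(hδpos i).le, min_le_left _ _⟩
    · have : p i = x + (δ i) • (-(b i)) := by
        simp only [hpdef, hsdef, if_neg hti]
        rw [smul_neg, mul_neg_one, neg_smul]
      rw [this]
      exact hm i (δ i) ⟨(hδpos i).le, min_le_right _ _⟩
  have hts : ∀ i, |t i| * s i = t i := by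
    intro i
    by_cases hti : 0 ≤ t i
    · simp [hsdef, hti, abs_of_nonneg hti]
    · push_neg at hti
      simp [hsdef, not_le.2 hti, abs_of_neg hti]
  have hcomb : (1 - ∑ i, a i) • x + ∑ i, a i • p i = y := by
    have hterm : ∀ i, a i • p i = a i • x + t i • b i := by
      intro i
      rw [hpdef]
      simp only [smul_add]
      congr 1
      rw [smul_smul]
      congr 1
      have h5 : a i * (δ i * s i) = |t i| * s i * ((δ i)⁻¹ * δ i) := by
        show |t i| / δ i * (δ i * s i) = _
        ring
      rw [h5, inv_mul_cancel₀ (hδpos i).ne', mul_one, hts i]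
    rw [Finset.sum_congr rfl fun i _ => hterm i, Finset.sum_add_distrib,
      ← Finset.sum_smul]
    have hrepr : ∑ i, t i • b i = y - x := by
      simpa [ht] using b.sum_repr (y - x)
    rw [hrepr, sub_smul, one_smul]
    abel
  have key : (1 - ∑ i, a i) • x + ∑ i, a i • p i ∈ A := by
    have hmemA := hA.sum_mem (t := (Finset.univ : Finset (Option (Fin n))))
      (w := fun j => Option.elim j (1 - ∑ i, a i) a)
      (z := fun j => Option.elim j x p)
      (fun j _ => by
        cases j with
        | none => show 0 ≤ 1 - ∑ i, a i; linarith
        | some i => exact hanonneg i)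
      (by
        rw [Fintype.sum_option]
        show (1 - ∑ i, a i) + ∑ i, a i = 1
        ring)
      (fun j _ => by
        cases j with
        | none => exact hxA
        | some i => exact hpA i)
    rw [Fintype.sum_option] at hmemA
    exact hmemA
  rw [hcomb] at key
  exact key

end Aux

/-- `X` is finite-dimensional iff the weak topology induced by the
algebraic dual coincides with the core convex topology. -/
theorem stmt11 (X : Type*) [AddCommGroup X] [Module ℝ X] :
    FiniteDimensional ℝ X ↔ tau0 X = tauc X := by
  constructor
  · intro h
    exact le_antisymm (tau0_le_tauc X) (tauc_le_tau0 X)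
  · intro h
    exact findim_of_le X h.le
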